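/- Let σ be the logistic sigmoid, σ' its derivative, and let φ(t) = (2π)^{−1/2} e^{−t²/2} be the standard normal density. For every s > 0 and every μ ∈ ℝ: (i) ∫_ℝ σ'(s t + μ) φ(t) dt > 0; and (ii) ∫_ℝ t · σ'(s t + μ) φ(t) dt is strictly negative if μ > 0, equal to 0 if μ = 0, and strictly positive if μ < 0. -/

import Mathlib

open MeasureTheory Real
open scoped ENNReal

/-- The logistic sigmoid `σ(x) = 1/(1+e^{−x})`. -/
noncomputable def logistic (x : ℝ) : ℝ := 1 / (1 + Real.exp (-x))

/-- The standard normal density `φ(t) = (2π)^{−1/2} e^{−t²/2}`. -/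
noncomputable def stdNormalPDF (t : ℝ) : ℝ :=
  (Real.sqrt (2 * Real.pi))⁻¹ * Real.exp (-(t ^ 2) / 2)

noncomputable def sigK (x : ℝ) : ℝ := Real.exp (-x) / (1 + Real.exp (-x)) ^ 2

lemma one_add_exp_pos (x : ℝ) : 0 < 1 + Real.exp (-x) := by positivity

lemma hasDerivAt_logistic (x : ℝ) : HasDerivAt logistic (sigK x) x := by
  have h1 : HasDerivAt (fun x : ℝ => 1 + Real.exp (-x)) (-Real.exp (-x)) x := by
    simpa using (((Real.hasDerivAt_exp (-x)).comp x (hasDerivAt_neg x)).const_add 1)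
  have h2 := h1.inv (ne_of_gt (one_add_exp_pos x))
  have h3 : HasDerivAt (fun x : ℝ => (1 + Real.exp (-x))⁻¹)
      (Real.exp (-x) / (1 + Real.exp (-x)) ^ 2) x := by
    rw [neg_neg] at h2; exact h2
  have hl : logistic = fun x : ℝ => (1 + Real.exp (-x))⁻¹ := by
    funext y; simp [logistic, one_div]
  rw [hl, sigK]
  exact h3

lemma deriv_logistic : deriv logistic = sigK := by
  funext x; exact (hasDerivAt_logistic x).deriv

lemma sigK_pos (x : ℝ) : 0 < sigK x := by
  unfold sigK; positivity

lemma sigK_le_one (x : ℝ) : sigK x ≤ 1 := by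
  unfold sigK
  rw [div_le_one (by positivity)]
  nlinarith [Real.exp_pos (-x), sq_nonneg (Real.exp (-x))]

lemma sigK_even (x : ℝ) : sigK (-x) = sigK x := by
  unfold sigK
  have h := Real.exp_pos x
  have h' := Real.exp_pos (-x)
  have hx : Real.exp (-x) = (Real.exp x)⁻¹ := Real.exp_neg x
  rw [neg_neg, hx]
  field_simp
  ring

lemma sigK_strictAnti {a b : ℝ} (ha : 0 ≤ a) (hab : a < b) : sigK b < sigK a := by
  unfold sigK
  have hea := Real.exp_pos (-a)
  have heb := Real.exp_pos (-b)
  rw [div_lt_div_iff₀ (by positivity) (by positivity)]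
  have h1 : Real.exp (-b) < Real.exp (-a) := Real.exp_lt_exp.2 (by linarith)
  have h2 : Real.exp (-a) * Real.exp (-b) < 1 := by
    have : Real.exp (-a) * Real.exp (-b) = Real.exp (-(a+b)) := by
      rw [← Real.exp_add]; ring_nf
    rw [this]
    exact Real.exp_lt_one_iff.2 (by linarith)
  nlinarith [mul_pos hea heb, sq_nonneg (Real.exp (-a) - Real.exp (-b))]

lemma stdNormalPDF_pos (t : ℝ) : 0 < stdNormalPDF t := by
  unfold stdNormalPDF
  have : (0:ℝ) < Real.sqrt (2 * Real.pi) := Real.sqrt_pos.2 (by positivity)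
  positivity

lemma stdNormalPDF_even (t : ℝ) : stdNormalPDF (-t) = stdNormalPDF t := by
  unfold stdNormalPDF; ring_nf

lemma continuous_sigK : Continuous sigK := by
  unfold sigK
  exact (Real.continuous_exp.comp continuous_neg).div
    ((continuous_const.add (Real.continuous_exp.comp continuous_neg)).pow 2)
    (fun x => by positivity)

lemma continuous_stdNormalPDF : Continuous stdNormalPDF := by
  unfold stdNormalPDF
  fun_prop

lemma integrable_stdNormalPDF : Integrable stdNormalPDF := by
  have : Integrable (fun t : ℝ => Real.exp (-(1/2 : ℝ) * t ^ 2)) :=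
    integrable_exp_neg_mul_sq (by norm_num)
  have h := this.const_mul (Real.sqrt (2 * Real.pi))⁻¹
  refine h.congr (Filter.Eventually.of_forall fun t => ?_)
  unfold stdNormalPDF; ring_nf

lemma integrable_mul_stdNormalPDF : Integrable (fun t : ℝ => t * stdNormalPDF t) := by
  have : Integrable (fun t : ℝ => t * Real.exp (-(1/2 : ℝ) * t ^ 2)) :=
    integrable_mul_exp_neg_mul_sq (by norm_num)
  have h := this.const_mul (Real.sqrt (2 * Real.pi))⁻¹
  refine h.congr (Filter.Eventually.of_forall fun t => ?_)
  unfold stdNormalPDF; ring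

lemma integrable_f1 (s μ : ℝ) : Integrable (fun t : ℝ => sigK (s * t + μ) * stdNormalPDF t) := by
  refine integrable_stdNormalPDF.mono' ?_ (Filter.Eventually.of_forall fun t => ?_)
  · exact ((continuous_sigK.comp (by continuity)).mul continuous_stdNormalPDF).aestronglyMeasurable
  · rw [Real.norm_eq_abs,
      abs_of_nonneg (mul_nonneg (sigK_pos _).le (stdNormalPDF_pos t).le)]
    calc sigK (s*t+μ) * stdNormalPDF t ≤ 1 * stdNormalPDF t :=
          mul_le_mul_of_nonneg_right (sigK_le_one _) (stdNormalPDF_pos t).le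
      _ = stdNormalPDF t := one_mul _

lemma integrable_f2 (s μ : ℝ) :
    Integrable (fun t : ℝ => t * sigK (s * t + μ) * stdNormalPDF t) := by
  refine integrable_mul_stdNormalPDF.abs.mono' ?_ (Filter.Eventually.of_forall fun t => ?_)
  · exact ((continuous_id.mul (continuous_sigK.comp (by continuity))).mul
      continuous_stdNormalPDF).aestronglyMeasurable
  · rw [Real.norm_eq_abs]
    have h1 : |t * sigK (s*t+μ) * stdNormalPDF t| = |t| * sigK (s*t+μ) * stdNormalPDF t := by
      rw [abs_mul, abs_mul, abs_of_nonneg (sigK_pos _).le, abs_of_nonneg (stdNormalPDF_pos t).le]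
    rw [h1]
    calc |t| * sigK (s*t+μ) * stdNormalPDF t ≤ |t| * 1 * stdNormalPDF t :=
          mul_le_mul_of_nonneg_right
            (mul_le_mul_of_nonneg_left (sigK_le_one _) (abs_nonneg t))
            (stdNormalPDF_pos t).le
      _ = |t| * stdNormalPDF t := by ring
      _ ≤ |t * stdNormalPDF t| := le_of_eq (by
          rw [abs_mul, abs_of_nonneg (stdNormalPDF_pos t).le])

/-- Key: `I(s,μ) = -I(s,-μ)`. -/
lemma I_neg (s μ : ℝ) :
    (∫ t : ℝ, t * sigK (s * t + μ) * stdNormalPDF t) =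
      -∫ t : ℝ, t * sigK (s * t + (-μ)) * stdNormalPDF t := by
  have := integral_neg_eq_self (fun t : ℝ => t * sigK (s * t + μ) * stdNormalPDF t)
    (volume : Measure ℝ)
  rw [← this, ← integral_neg]
  congr 1
  funext t
  have : s * (-t) + μ = -(s * t + (-μ)) := by ring
  rw [this, sigK_even, stdNormalPDF_even]
  ring

lemma I_neg_of_pos (s μ : ℝ) (hs : 0 < s) (hμ : 0 < μ) :
    (∫ t : ℝ, t * sigK (s * t + μ) * stdNormalPDF t) < 0 := by
  set f : ℝ → ℝ := fun t => t * sigK (s * t + μ) * stdNormalPDF t with hf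
  have hint : Integrable f := integrable_f2 s μ
  -- split integral
  have hsplit : (∫ t, f t) = (∫ t in Set.Iic 0, f t) + ∫ t in Set.Ioi 0, f t :=
    (intervalIntegral.integral_Iic_add_Ioi hint.integrableOn hint.integrableOn).symm
  have hIic : (∫ t in Set.Iic 0, f t) = ∫ t in Set.Ioi 0, f (-t) := by
    rw [integral_comp_neg_Ioi]; norm_num
  have hcomb : (∫ t, f t) = ∫ t in Set.Ioi 0, (f t + f (-t)) := by
    rw [hsplit, hIic,
      integral_add hint.integrableOn (hint.comp_neg).integrableOn]
    ring
  rw [hcomb]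
  -- the combined integrand is negative on Ioi 0
  have hneg : ∀ t ∈ Set.Ioi (0:ℝ), f t + f (-t) < 0 := by
    intro t ht
    have ht : 0 < t := ht
    have hφ := stdNormalPDF_pos t
    have key : sigK (s * t + μ) < sigK (s * t - μ) := by
      have hb : 0 < s * t + μ := by positivity
      have heq : sigK (s * t - μ) = sigK |s * t - μ| := by
        rcases abs_cases (s * t - μ) with ⟨h, _⟩ | ⟨h, _⟩
        · rw [h]
        · rw [h, sigK_even]
      rw [heq]
      apply sigK_strictAnti (abs_nonneg _)
      rw [abs_lt]
      constructor <;> nlinarith [mul_pos hs ht]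
    have hfe : f t + f (-t) = t * stdNormalPDF t * (sigK (s*t+μ) - sigK (s*t-μ)) := by
      simp only [hf]
      have h1 : s * (-t) + μ = -(s * t - μ) := by ring
      rw [h1, sigK_even, stdNormalPDF_even]
      ring
    rw [hfe]
    have : sigK (s*t+μ) - sigK (s*t-μ) < 0 := by linarith
    have htφ : 0 < t * stdNormalPDF t := by positivity
    nlinarith
  -- strict negativity via support argument
  have hint2 : IntegrableOn (fun t => -(f t + f (-t))) (Set.Ioi 0) := by
    exact ((hint.add hint.comp_neg).integrableOn).neg
  have hae : 0 ≤ᵐ[volume.restrict (Set.Ioi (0:ℝ))] fun t => -(f t + f (-t)) := by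
    filter_upwards [ae_restrict_mem measurableSet_Ioi] with t ht
    have := hneg t ht
    simp only [Pi.zero_apply]
    linarith
  have hpos : 0 < ∫ t in Set.Ioi 0, -(f t + f (-t)) := by
    rw [setIntegral_pos_iff_support_of_nonneg_ae hae hint2]
    have hsub : Set.Ioi (0:ℝ) ⊆ Function.support (fun t => -(f t + f (-t))) ∩ Set.Ioi 0 := by
      intro t ht
      refine ⟨?_, ht⟩
      simp only [Function.mem_support]
      have := hneg t ht
      intro h
      have h2 : f t + f (-t) = 0 := by linarith [neg_eq_zero.mp h]
      linarith
    calc (0:ℝ≥0∞) < volume (Set.Ioi (0:ℝ)) := by simp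
      _ ≤ _ := measure_mono hsub
  rw [integral_neg] at hpos
  linarith

/-- For every `s > 0` and `μ ∈ ℝ`:
(i) `∫_ℝ σ'(s t + μ) φ(t) dt > 0`; and
(ii) `∫_ℝ t · σ'(s t + μ) φ(t) dt` is strictly negative if `μ > 0`, zero if `μ = 0`,
and strictly positive if `μ < 0`, where `σ'` is the derivative of the logistic sigmoid. -/
theorem smoothed_sigmoid_partial_derivative_signs (s μ : ℝ) (hs : 0 < s) :
    (0 < ∫ t : ℝ, deriv logistic (s * t + μ) * stdNormalPDF t) ∧
    (0 < μ → (∫ t : ℝ, t * deriv logistic (s * t + μ) * stdNormalPDF t) < 0) ∧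
    (μ = 0 → (∫ t : ℝ, t * deriv logistic (s * t + μ) * stdNormalPDF t) = 0) ∧
    (μ < 0 → 0 < ∫ t : ℝ, t * deriv logistic (s * t + μ) * stdNormalPDF t) := by
  rw [deriv_logistic]
  refine ⟨?_, ?_, ?_, ?_⟩
  · rw [integral_pos_iff_support_of_nonneg
      (fun t => (mul_pos (sigK_pos _) (stdNormalPDF_pos t)).le) (integrable_f1 s μ)]
    have : Function.support (fun t : ℝ => sigK (s * t + μ) * stdNormalPDF t) = Set.univ := by
      ext t; simp only [Function.mem_support, Set.mem_univ, iff_true]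
      exact (mul_pos (sigK_pos _) (stdNormalPDF_pos t)).ne'
    rw [this]; simp
  · exact fun hμ => I_neg_of_pos s μ hs hμ
  · intro hμ; subst hμ
    have := I_neg s 0
    simp only [neg_zero] at this
    linarith
  · intro hμ
    have h := I_neg s μ
    have h2 := I_neg_of_pos s (-μ) hs (by linarith)
    rw [h]; linarith
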